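/- For every ONE-IN-THREE 3SAT instance φ, the quadratic module Q generated in ℝ[X, Y] by the polynomials C_i·Y, -C_i·Y (i ∈ Fin k) and 1 - X_j², X_j² - 1 (j ∈ Fin n) is Archimedean if and only if φ is not satisfiable. -/

import Mathlib

open Finset Filter

/-- Sign of a literal: `1` if positive, `-1` if negated. -/
noncomputable def Eps (c : Bool) : ℝ := if c then 1 else -1

/-- A ONE-IN-THREE 3SAT instance, encoded by a variable-index map `v` and a sign map `b`,
is satisfiable if some Boolean assignment makes exactly one literal true in each clause. -/
def OneInThreeSat {n k : ℕ} (v : Fin k → Fin 3 → Fin n) (b : Fin k → Fin 3 → Bool) : Prop :=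
  ∃ a : Fin n → Bool, ∀ i : Fin k, ∃! t : Fin 3, a (v i t) = b i t

/-- The quartic polynomial `s_φ` associated with a ONE-IN-THREE 3SAT instance. -/
noncomputable def sPhi {n k : ℕ} (v : Fin k → Fin 3 → Fin n) (b : Fin k → Fin 3 → Bool)
    (x : Fin n → ℝ) : ℝ :=
  (∑ i : Fin k,
    (Eps (b i 0) * x (v i 0) + Eps (b i 1) * x (v i 1) + Eps (b i 2) * x (v i 2) + 1) ^ 2)
  + ∑ j : Fin n, (1 - x j ^ 2) ^ 2

open MvPolynomial

/-- A real polynomial is a sum of squares. -/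
def IsSos {σ : Type*} (p : MvPolynomial σ ℝ) : Prop :=
  ∃ (r : ℕ) (q : Fin r → MvPolynomial σ ℝ), p = ∑ l : Fin r, q l ^ 2

/-- The clause polynomial `C_i = ε i 0 · X_{v i 0} + ε i 1 · X_{v i 1} + ε i 2 · X_{v i 2} + 1`
in `ℝ[X]`. -/
noncomputable def Cpoly {n k : ℕ} (v : Fin k → Fin 3 → Fin n) (b : Fin k → Fin 3 → Bool)
    (i : Fin k) : MvPolynomial (Fin n) ℝ :=
  C (Eps (b i 0)) * X (v i 0) + C (Eps (b i 1)) * X (v i 1) + C (Eps (b i 2)) * X (v i 2) + 1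

/-- Membership in the quadratic module generated by the finite family `g`. -/
def InQuadraticModule {σ ι : Type*} [Fintype ι] (g : ι → MvPolynomial σ ℝ)
    (p : MvPolynomial σ ℝ) : Prop :=
  ∃ (σ₀ : MvPolynomial σ ℝ) (s : ι → MvPolynomial σ ℝ),
    IsSos σ₀ ∧ (∀ l : ι, IsSos (s l)) ∧ p = σ₀ + ∑ l : ι, s l * g l

/-- The generators `C_i·Y, -C_i·Y` (`i ∈ Fin k`) and `1 - X_j², X_j² - 1` (`j ∈ Fin n`)
of the quadratic module in `ℝ[X, Y]`. -/
noncomputable def archGens {n k : ℕ} (v : Fin k → Fin 3 → Fin n) (b : Fin k → Fin 3 → Bool) :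
    (Fin k ⊕ Fin k) ⊕ (Fin n ⊕ Fin n) → MvPolynomial (Fin n ⊕ Unit) ℝ :=
  Sum.elim
    (Sum.elim
      (fun i => rename Sum.inl (Cpoly v b i) * X (Sum.inr ()))
      (fun i => -(rename Sum.inl (Cpoly v b i) * X (Sum.inr ()))))
    (Sum.elim
      (fun j => 1 - X (Sum.inl j) ^ 2)
      (fun j => X (Sum.inl j) ^ 2 - 1))

noncomputable def cubePt {n : ℕ} (a : Fin n → Bool) : Fin n → ℝ := fun j => Eps (a j)

lemma eps_sq (c : Bool) : Eps c ^ 2 = 1 := by cases c <;> simp [Eps]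

lemma finSuccEquiv_rename_succ {n : ℕ} (m : MvPolynomial (Fin n) ℝ) :
    finSuccEquiv ℝ n (rename Fin.succ m) = Polynomial.C m := by
  have h : (finSuccEquiv ℝ n).toAlgHom.comp (rename (Fin.succ (n := n))) =
      (Polynomial.CAlgHom : MvPolynomial (Fin n) ℝ →ₐ[ℝ] _) := by
    apply MvPolynomial.algHom_ext
    intro j
    simp [finSuccEquiv_X_succ, Polynomial.CAlgHom]
  have := congrArg (fun f => f m) (congrArg DFunLike.coe h)
  simpa [Polynomial.CAlgHom] using this

lemma cube_vanish_mem : ∀ {n : ℕ} (p : MvPolynomial (Fin n) ℝ),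
    (∀ a : Fin n → Bool, eval (cubePt a) p = 0) →
    ∃ q : Fin n → MvPolynomial (Fin n) ℝ, p = ∑ j, q j * (X j ^ 2 - 1) := by
  intro n
  induction n with
  | zero =>
    intro p hp
    refine ⟨fun _ => 0, ?_⟩
    have h0 := eq_C_of_isEmpty p
    have hz : coeff 0 p = 0 := by
      have := hp (fun _ => true)
      rw [h0] at this; simpa using this
    rw [h0, hz]; simp
  | succ n ih =>
    intro p hp
    set P := finSuccEquiv ℝ n p with hPdef
    set g : Polynomial (MvPolynomial (Fin n) ℝ) := Polynomial.X ^ 2 - Polynomial.C 1 with hg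
    have hmonic : g.Monic := Polynomial.monic_X_pow_sub_C 1 (by norm_num)
    have hdecomp : P %ₘ g + g * (P /ₘ g) = P := Polynomial.modByMonic_add_div P g
    have hdeg : (P %ₘ g).degree ≤ 1 := by
      have h2 : g.degree = 2 := by
        rw [hg]; exact Polynomial.degree_X_pow_sub_C (by norm_num) 1
      have hlt := Polynomial.degree_modByMonic_lt P hmonic
      rw [h2] at hlt
      rcases eq_or_ne (P %ₘ g) 0 with h0 | h0
      · simp [h0]
      · rw [Polynomial.degree_eq_natDegree h0] at hlt ⊢
        exact_mod_cast Nat.lt_succ_iff.mp (by exact_mod_cast hlt)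
    set r0 := (P %ₘ g).coeff 0 with hr0def
    set r1 := (P %ₘ g).coeff 1 with hr1def
    have hr : P %ₘ g = Polynomial.C r1 * Polynomial.X + Polynomial.C r0 :=
      Polynomial.eq_X_add_C_of_degree_le_one hdeg
    -- evaluation on cube
    have hev : ∀ (a' : Fin n → Bool) (c : Bool),
        eval (cubePt a') r1 * Eps c + eval (cubePt a') r0 = 0 := by
      intro a' c
      have hcons : cubePt (Fin.cons c a') = Fin.cons (Eps c) (cubePt a') := by
        funext j
        refine Fin.cases ?_ (fun i => ?_) j <;> simp [cubePt]
      have h := hp (Fin.cons c a')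
      rw [hcons, eval_eq_eval_mv_eval'] at h
      rw [← hPdef, ← hdecomp, hr] at h
      have hgz : Polynomial.eval (Eps c) (Polynomial.map (eval (cubePt a')) g) = 0 := by
        simp [hg, eps_sq]
      simp only [Polynomial.map_add, Polynomial.map_mul, Polynomial.eval_add,
        Polynomial.eval_mul, hgz, mul_zero, zero_mul, add_zero] at h
      simpa using h
    have hv0 : ∀ a' : Fin n → Bool, eval (cubePt a') r0 = 0 := by
      intro a'
      have h1 := hev a' true
      have h2 := hev a' false
      simp [Eps] at h1 h2
      linarith
    have hv1 : ∀ a' : Fin n → Bool, eval (cubePt a') r1 = 0 := by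
      intro a'
      have h1 := hev a' true
      have h2 := hev a' false
      simp [Eps] at h1 h2
      linarith
    obtain ⟨q0, hq0⟩ := ih r0 hv0
    obtain ⟨q1, hq1⟩ := ih r1 hv1
    -- reconstruct
    have hsymmC : ∀ m : MvPolynomial (Fin n) ℝ,
        (finSuccEquiv ℝ n).symm (Polynomial.C m) = rename Fin.succ m := by
      intro m; rw [← finSuccEquiv_rename_succ m, AlgEquiv.symm_apply_apply]
    have hsymmX : (finSuccEquiv ℝ n).symm Polynomial.X = X 0 := by
      rw [← finSuccEquiv_X_zero (R := ℝ) (n := n), AlgEquiv.symm_apply_apply]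
    have hp' : p = (finSuccEquiv ℝ n).symm
        (Polynomial.C r1 * Polynomial.X + Polynomial.C r0 + g * (P /ₘ g)) := by
      rw [← hr, hdecomp]
      exact ((MvPolynomial.finSuccEquiv ℝ n).symm_apply_apply p).symm
    rw [map_add, map_add, map_mul, map_mul, hsymmC, hsymmC, hsymmX] at hp'
    have hgsymm : (finSuccEquiv ℝ n).symm g = X 0 ^ 2 - 1 := by
      rw [hg, map_sub, map_pow, hsymmX]; simp
    rw [hgsymm] at hp'
    set D := (finSuccEquiv ℝ n).symm (P /ₘ g) with hD
    refine ⟨Fin.cases D (fun j => rename Fin.succ (q0 j) + rename Fin.succ (q1 j) * X 0), ?_⟩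
    rw [Fin.sum_univ_succ]
    simp only [Fin.cases_zero, Fin.cases_succ]
    have e0 : rename (Fin.succ (n := n)) r0
        = ∑ j : Fin n, rename Fin.succ (q0 j) * (X j.succ ^ 2 - 1) := by
      rw [hq0, map_sum]
      exact Finset.sum_congr rfl fun j _ => by simp [rename_X]
    have e1 : rename (Fin.succ (n := n)) r1
        = ∑ j : Fin n, rename Fin.succ (q1 j) * (X j.succ ^ 2 - 1) := by
      rw [hq1, map_sum]
      exact Finset.sum_congr rfl fun j _ => by simp [rename_X]
    have key : ∑ j : Fin n,
        (rename Fin.succ (q0 j) + rename Fin.succ (q1 j) * X 0) * (X j.succ ^ 2 - 1)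
        = rename Fin.succ r0 + rename Fin.succ r1 * X 0 := by
      rw [e0, e1, Finset.sum_mul, ← Finset.sum_add_distrib]
      exact Finset.sum_congr rfl fun j _ => by ring
    rw [hp', key]
    ring

lemma eps_mul (c d : Bool) : Eps c * Eps d = if d = c then 1 else -1 := by
  cases c <;> cases d <;> norm_num [Eps]

-- SOS helpers
lemma isSos_sq {σ : Type*} (p : MvPolynomial σ ℝ) : IsSos (p ^ 2) :=
  ⟨1, fun _ => p, by simp⟩

lemma isSos_one {σ : Type*} : IsSos (1 : MvPolynomial σ ℝ) := by
  simpa using isSos_sq (1 : MvPolynomial σ ℝ)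

lemma isSos_add {σ : Type*} {p q : MvPolynomial σ ℝ} (hp : IsSos p) (hq : IsSos q) :
    IsSos (p + q) := by
  obtain ⟨r1, f1, rfl⟩ := hp
  obtain ⟨r2, f2, rfl⟩ := hq
  refine ⟨r1 + r2, Fin.append f1 f2, ?_⟩
  rw [Fin.sum_univ_add]
  simp [Fin.append_left, Fin.append_right]

lemma isSos_fintype_sum_sq {σ ι : Type*} [Fintype ι] (f : ι → MvPolynomial σ ℝ) :
    IsSos (∑ i, (f i) ^ 2) := by
  refine ⟨Fintype.card ι, fun l => f ((Fintype.equivFin ι).symm l), ?_⟩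
  rw [← Equiv.sum_comp (Fintype.equivFin ι).symm (fun i => (f i) ^ 2)]

lemma isSos_eval_nonneg {σ : Type*} {p : MvPolynomial σ ℝ} (hp : IsSos p) (z : σ → ℝ) :
    0 ≤ eval z p := by
  obtain ⟨r, q, rfl⟩ := hp
  rw [map_sum]
  exact Finset.sum_nonneg fun l _ => by rw [map_pow]; positivity

-- pos/neg decomposition
noncomputable def posP {σ : Type*} (u : MvPolynomial σ ℝ) : MvPolynomial σ ℝ :=
  (C (2⁻¹ : ℝ) * (u + 1)) ^ 2

noncomputable def negP {σ : Type*} (u : MvPolynomial σ ℝ) : MvPolynomial σ ℝ :=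
  (C (2⁻¹ : ℝ) * (u - 1)) ^ 2

lemma posP_sub_negP {σ : Type*} (u : MvPolynomial σ ℝ) : posP u - negP u = u := by
  have hc : (4 : MvPolynomial σ ℝ) = C (4 : ℝ) := (map_ofNat (C : ℝ →+* MvPolynomial σ ℝ) 4).symm
  have h1 : posP u - negP u = (C (2⁻¹ : ℝ) ^ 2 * C (4:ℝ)) * u := by
    rw [posP, negP, ← hc]; ring
  rw [h1, ← C_pow, ← C_mul]
  norm_num

lemma isSos_posP {σ : Type*} (u : MvPolynomial σ ℝ) : IsSos (posP u) := isSos_sq _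
lemma isSos_negP {σ : Type*} (u : MvPolynomial σ ℝ) : IsSos (negP u) := isSos_sq _

-- clause evaluation
lemma eval_Cpoly {n k : ℕ} (v : Fin k → Fin 3 → Fin n) (b : Fin k → Fin 3 → Bool)
    (a : Fin n → Bool) (i : Fin k) :
    eval (cubePt a) (Cpoly v b i) =
      (if a (v i 0) = b i 0 then (1:ℝ) else -1) + (if a (v i 1) = b i 1 then 1 else -1)
        + (if a (v i 2) = b i 2 then 1 else -1) + 1 := by
  simp only [Cpoly, map_add, map_mul, eval_C, eval_X, map_one, cubePt]
  rw [eps_mul, eps_mul, eps_mul]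

lemma existsUnique_fin3_0 {P : Fin 3 → Prop} (h0 : P 0) (h1 : ¬P 1) (h2 : ¬P 2) :
    ∃! t, P t :=
  ⟨0, h0, fun t ht => by
    fin_cases t
    · rfl
    · exact absurd ht h1
    · exact absurd ht h2⟩

lemma existsUnique_fin3_1 {P : Fin 3 → Prop} (h0 : ¬P 0) (h1 : P 1) (h2 : ¬P 2) :
    ∃! t, P t :=
  ⟨1, h1, fun t ht => by
    fin_cases t
    · exact absurd ht h0
    · rfl
    · exact absurd ht h2⟩

lemma existsUnique_fin3_2 {P : Fin 3 → Prop} (h0 : ¬P 0) (h1 : ¬P 1) (h2 : P 2) :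
    ∃! t, P t :=
  ⟨2, h2, fun t ht => by
    fin_cases t
    · exact absurd ht h0
    · exact absurd ht h1
    · rfl⟩

lemma eval_Cpoly_eq_zero {n k : ℕ} {v : Fin k → Fin 3 → Fin n} {b : Fin k → Fin 3 → Bool}
    {a : Fin n → Bool} {i : Fin k} (h : ∃! t : Fin 3, a (v i t) = b i t) :
    eval (cubePt a) (Cpoly v b i) = 0 := by
  obtain ⟨t0, ht0, huniq⟩ := h
  rw [eval_Cpoly]
  by_cases h0 : a (v i 0) = b i 0 <;> by_cases h1 : a (v i 1) = b i 1 <;>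
    by_cases h2 : a (v i 2) = b i 2 <;> simp only [h0, h1, h2, if_true, if_false, ite_true,
      ite_false, eq_self_iff_true, not_true, not_false_iff] <;>
  first
    | (norm_num; done)
    | exact absurd ((huniq 0 h0).trans (huniq 1 h1).symm) (by decide)
    | exact absurd ((huniq 0 h0).trans (huniq 2 h2).symm) (by decide)
    | exact absurd ((huniq 1 h1).trans (huniq 2 h2).symm) (by decide)
    | (exfalso; fin_cases t0 <;> simp_all)

lemma clause_sq_ge {n k : ℕ} {v : Fin k → Fin 3 → Fin n} {b : Fin k → Fin 3 → Bool}
    {a : Fin n → Bool} {i : Fin k} (h : ¬ ∃! t : Fin 3, a (v i t) = b i t) :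
    4 ≤ (eval (cubePt a) (Cpoly v b i)) ^ 2 := by
  rw [eval_Cpoly]
  by_cases h0 : a (v i 0) = b i 0 <;> by_cases h1 : a (v i 1) = b i 1 <;>
    by_cases h2 : a (v i 2) = b i 2 <;> simp only [h0, h1, h2, if_true, if_false, ite_true,
      ite_false, eq_self_iff_true, not_true, not_false_iff] <;>
  first
    | (norm_num; done)
    | exact absurd (existsUnique_fin3_0 h0 h1 h2) h
    | exact absurd (existsUnique_fin3_1 h0 h1 h2) h
    | exact absurd (existsUnique_fin3_2 h0 h1 h2) h

-- interpolation
noncomputable def lagr {n : ℕ} (a : Fin n → Bool) : MvPolynomial (Fin n) ℝ :=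
  ∏ j, (C (2⁻¹ : ℝ) * (1 + C (Eps (a j)) * X j))

lemma eval_lagr {n : ℕ} (a a' : Fin n → Bool) :
    eval (cubePt a') (lagr a) = if a = a' then 1 else 0 := by
  rw [lagr, map_prod]
  split_ifs with haa
  · subst haa
    rw [Finset.prod_eq_one]
    intro j _
    simp only [map_mul, map_add, eval_C, eval_X, map_one, cubePt]
    cases a j <;> norm_num [Eps]
  · obtain ⟨j, hj⟩ : ∃ j, a j ≠ a' j := by
      by_contra hc
      push_neg at hc
      exact haa (funext hc)
    apply Finset.prod_eq_zero (Finset.mem_univ j)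
    simp only [map_mul, map_add, eval_C, eval_X, map_one, cubePt]
    cases hja : a j <;> cases hja' : a' j <;> simp_all [Eps]

theorem quadratic_module_archimedean_iff_not_satisfiable {n k : ℕ}
    (v : Fin k → Fin 3 → Fin n) (b : Fin k → Fin 3 → Bool) :
    (∃ R : ℝ, 0 < R ∧ InQuadraticModule (archGens v b)
        (C R - (∑ j : Fin n, X (Sum.inl j) ^ 2) - X (Sum.inr ()) ^ 2)) ↔
      ¬ OneInThreeSat v b := by
  constructor
  · rintro ⟨R, hR, σ₀, s, hσ₀, hs, heq⟩ ⟨a, ha⟩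
    set y : ℝ := |R| + 1 with hy
    set z : (Fin n ⊕ Unit) → ℝ := Sum.elim (cubePt a) (fun _ => y) with hz
    have hgen : ∀ l, eval z (archGens v b l) = 0 := by
      rintro ((i | i) | (j | j)) <;>
        simp only [archGens, Sum.elim_inl, Sum.elim_inr, map_mul, map_sub, map_neg, map_one,
          map_pow, eval_X, eval_rename]
      · have : z ∘ Sum.inl = cubePt a := rfl
        rw [this, eval_Cpoly_eq_zero (ha i), zero_mul]
      · have : z ∘ Sum.inl = cubePt a := rfl
        rw [this, eval_Cpoly_eq_zero (ha i), zero_mul, neg_zero]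
      · have : z (Sum.inl j) = Eps (a j) := rfl
        rw [this, eps_sq, sub_self]
      · have : z (Sum.inl j) = Eps (a j) := rfl
        rw [this, eps_sq, sub_self]
    have h0 := congrArg (eval z) heq
    rw [map_sub, map_sub, eval_C, map_pow, eval_X, map_add, map_sum] at h0
    have hz' : z (Sum.inr ()) = y := rfl
    rw [hz'] at h0
    have hsum0 : ∑ l, eval z (s l * archGens v b l) = 0 := by
      apply Finset.sum_eq_zero
      intro l _
      rw [map_mul, hgen l, mul_zero]
    rw [map_sum, hsum0, add_zero] at h0
    have hXs : ∑ j : Fin n, eval z (X (Sum.inl j) ^ 2) = (n : ℝ) := by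
      have : ∀ j : Fin n, eval z (X (Sum.inl j) ^ 2) = 1 := by
        intro j
        rw [map_pow, eval_X]
        exact eps_sq (a j)
      rw [Finset.sum_congr rfl fun j _ => this j]
      simp
    rw [hXs] at h0
    have hσnn := isSos_eval_nonneg hσ₀ z
    rw [← h0] at hσnn
    have hy1 : 1 ≤ y := by
      rw [hy]
      have := abs_nonneg R
      linarith
    have hyR : R < y := lt_of_le_of_lt (le_abs_self R) (by rw [hy]; linarith)
    nlinarith [Nat.cast_nonneg (α := ℝ) n]
  · intro hunsat
    refine ⟨(n : ℝ) + 1, by positivity, ?_⟩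
    -- the unsatisfiability bound
    set F : MvPolynomial (Fin n) ℝ := ∑ i, (Cpoly v b i) ^ 2 with hF
    have hFge : ∀ a : Fin n → Bool, 4 ≤ eval (cubePt a) F := by
      intro a
      have hna : ¬ ∀ i : Fin k, ∃! t : Fin 3, a (v i t) = b i t := fun hall => hunsat ⟨a, hall⟩
      push_neg at hna
      obtain ⟨i0, hi0⟩ := hna
      rw [hF, map_sum]
      calc (4:ℝ) ≤ (eval (cubePt a) (Cpoly v b i0)) ^ 2 := clause_sq_ge hi0
        _ ≤ ∑ i, eval (cubePt a) ((Cpoly v b i) ^ 2) := by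
            rw [Finset.sum_congr rfl fun i _ => map_pow (eval (cubePt a)) (Cpoly v b i) 2]
            exact Finset.single_le_sum
              (f := fun i => (eval (cubePt a) (Cpoly v b i)) ^ 2)
              (fun i _ => sq_nonneg _) (Finset.mem_univ i0)
    set w : (Fin n → Bool) → ℝ := fun a => eval (cubePt a) F - 4 with hw
    have hwnn : ∀ a, 0 ≤ w a := fun a => by
      have := hFge a
      simp only [hw]
      linarith
    set sphi : MvPolynomial (Fin n) ℝ :=
      ∑ a : Fin n → Bool, (C (Real.sqrt (w a)) * lagr a) ^ 2 with hsphi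
    set G : MvPolynomial (Fin n) ℝ := F - C 4 - sphi with hG
    have hGzero : ∀ a' : Fin n → Bool, eval (cubePt a') G = 0 := by
      intro a'
      have hterm : ∀ a : Fin n → Bool,
          eval (cubePt a') ((C (Real.sqrt (w a)) * lagr a) ^ 2)
            = if a = a' then w a else 0 := by
        intro a
        rw [map_pow, map_mul, eval_C, eval_lagr]
        split_ifs with h
        · rw [mul_one]; exact Real.sq_sqrt (hwnn a)
        · rw [mul_zero]; ring
      have hsphieval : eval (cubePt a') sphi = w a' := by
        rw [hsphi, map_sum, Finset.sum_congr rfl fun a _ => hterm a,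
          Finset.sum_ite_eq' Finset.univ a' w]
        simp
      rw [hG, map_sub, map_sub, eval_C, hsphieval]
      simp only [hw]
      ring
    obtain ⟨q, hq⟩ := cube_vanish_mem G hGzero
    -- the certificate
    set Y : MvPolynomial (Fin n ⊕ Unit) ℝ := X (Sum.inr ()) with hY
    set u : Fin k → MvPolynomial (Fin n ⊕ Unit) ℝ :=
      fun i => -(C (4⁻¹ : ℝ) * rename Sum.inl (Cpoly v b i) * Y) with hu
    set m : Fin n → MvPolynomial (Fin n ⊕ Unit) ℝ :=
      fun j => 1 - C (4⁻¹ : ℝ) * rename Sum.inl (q j) * Y ^ 2 with hm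
    refine ⟨1 + ∑ a : Fin n → Bool, (C (2⁻¹ * Real.sqrt (w a)) * rename Sum.inl (lagr a) * Y) ^ 2,
      Sum.elim (Sum.elim (fun i => posP (u i)) (fun i => negP (u i)))
        (Sum.elim (fun j => posP (m j)) (fun j => negP (m j))), ?_, ?_, ?_⟩
    · exact isSos_add isSos_one (isSos_fintype_sum_sq _)
    · rintro ((i | i) | (j | j))
      · exact isSos_posP _
      · exact isSos_negP _
      · exact isSos_posP _
      · exact isSos_negP _
    · -- the polynomial identity
      have hsum : ∑ l : (Fin k ⊕ Fin k) ⊕ (Fin n ⊕ Fin n),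
          (Sum.elim (Sum.elim (fun i => posP (u i)) (fun i => negP (u i)))
            (Sum.elim (fun j => posP (m j)) (fun j => negP (m j)))) l * archGens v b l
          = (∑ i, u i * (rename Sum.inl (Cpoly v b i) * Y))
            + ∑ j, m j * (1 - X (Sum.inl j) ^ 2) := by
        rw [Fintype.sum_sum_type, Fintype.sum_sum_type, Fintype.sum_sum_type]
        simp only [Sum.elim_inl, Sum.elim_inr, archGens]
        rw [← Finset.sum_add_distrib, ← Finset.sum_add_distrib]
        congr 1
        · refine Finset.sum_congr rfl fun i _ => ?_
          have hpn := posP_sub_negP (u i)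
          linear_combination (rename Sum.inl (Cpoly v b i) * Y) * hpn
        · refine Finset.sum_congr rfl fun j _ => ?_
          have hpn := posP_sub_negP (m j)
          linear_combination (1 - X (Sum.inl j) ^ 2) * hpn
      rw [hsum]
      -- h1
      have h1 : ∑ i, u i * (rename Sum.inl (Cpoly v b i) * Y)
          = -(C (4⁻¹ : ℝ) * Y ^ 2 * rename Sum.inl F) := by
        rw [hF, map_sum, Finset.mul_sum, ← Finset.sum_neg_distrib]
        refine Finset.sum_congr rfl fun i _ => ?_
        rw [map_pow, hu]
        ring
      -- h2
      have h2 : ∑ j, m j * (1 - X (Sum.inl j) ^ 2)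
          = (∑ j : Fin n, (1 - X (Sum.inl j) ^ 2))
            + C (4⁻¹ : ℝ) * Y ^ 2 * ∑ j, rename Sum.inl (q j) * (X (Sum.inl j) ^ 2 - 1) := by
        rw [Finset.mul_sum, ← Finset.sum_add_distrib]
        refine Finset.sum_congr rfl fun j _ => ?_
        rw [hm]
        ring
      -- h3 : renamed hq
      have h3 : rename (Sum.inl : Fin n → Fin n ⊕ Unit) F - C (4:ℝ)
            - rename (Sum.inl : Fin n → Fin n ⊕ Unit) sphi
          = ∑ j : Fin n, rename (Sum.inl : Fin n → Fin n ⊕ Unit) (q j)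
              * (X (Sum.inl j : Fin n ⊕ Unit) ^ 2 - 1) := by
        have := congrArg (rename (Sum.inl : Fin n → Fin n ⊕ Unit)) hq
        rw [hG] at this
        simp only [map_sub, map_sum, map_mul, map_pow, rename_X, rename_C, map_one] at this
        exact this
      -- h4 : σ₀ rewriting
      have h4 : (1 : MvPolynomial (Fin n ⊕ Unit) ℝ)
            + ∑ a : Fin n → Bool, (C (2⁻¹ * Real.sqrt (w a)) * rename Sum.inl (lagr a) * Y) ^ 2
          = 1 + C (4⁻¹ : ℝ) * rename Sum.inl sphi * Y ^ 2 := by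
        congr 1
        rw [hsphi, map_sum, Finset.mul_sum, Finset.sum_mul]
        refine Finset.sum_congr rfl fun a _ => ?_
        have hc2 : (C (2⁻¹ : ℝ) : MvPolynomial (Fin n ⊕ Unit) ℝ) ^ 2 = C (4⁻¹ : ℝ) := by
          rw [← C_pow]
          norm_num
        simp only [map_pow, map_mul, rename_C]
        linear_combination (C (Real.sqrt (w a)) ^ 2 * rename Sum.inl (lagr a) ^ 2 * Y ^ 2) * hc2
      have hN : ∑ j : Fin n, ((1 : MvPolynomial (Fin n ⊕ Unit) ℝ) - X (Sum.inl j) ^ 2)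
          = C ((n : ℝ)) - ∑ j : Fin n, X (Sum.inl j) ^ 2 := by
        rw [Finset.sum_sub_distrib, Finset.sum_const, Finset.card_univ, Fintype.card_fin,
          nsmul_eq_mul, mul_one, map_natCast (C : ℝ →+* MvPolynomial (Fin n ⊕ Unit) ℝ) n]
      have hC4 : (C (4⁻¹ : ℝ) : MvPolynomial (Fin n ⊕ Unit) ℝ) * C (4 : ℝ) = 1 := by
        rw [← C_mul]
        norm_num
      have hCn1 : (C ((n : ℝ) + 1) : MvPolynomial (Fin n ⊕ Unit) ℝ) = C ((n : ℝ)) + 1 := by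
        rw [map_add, map_one]
      rw [h1, h2, ← h3, h4, hN, hCn1]
      linear_combination (Y ^ 2) * hC4
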